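/- Let T₀ : [0,1] → [0,1] be Borel measurable, ρ : ℝ → ℝ a Lipschitz probability density supported in [−1,1], and ρ' : ℝ → ℝ bounded measurable such that ρ is differentiable a.e. with derivative ρ'. Let L₀ be the integral operator on L²([0,1]) with the reflected-noise kernel k₀ of (T₀, ρ); assume L₀ satisfies the mixing condition (A1), and let f₀ be its unique fixed point with ∫ f₀ dm = 1. Fix ℓ > 0 and set F̃_ℓ := {x ∈ [0,1] : ℓ ≤ T₀(x) ≤ 1 − ℓ}. Define G : L² → L² by (G h)(y) := ∫₀¹ [ Σ_{i∈ℤ} ( ρ'(2i + x − T₀(y)) + ρ'(2i − x − T₀(y)) ) ] h(x) dx. Let c ∈ L² with ⟨c, f₀⟩ = 0, and let w ∈ L² satisfy ⟨w, f₀⟩ = 0 and w − L₀* w = c, where L₀* is the Hilbert adjoint of L₀. Assume there exists F' ⊆ F̃_ℓ with m(F') > 0 such that f₀(y) > 0 and (G w)(y) ≠ 0 for every y ∈ F'. Define M := 𝟙_{F̃_ℓ}·f₀·(G w). Then M is essentially bounded, ‖M‖₂ > 0, and Ṫ := −M/‖M‖₂ is the unique minimizer of the functional h ↦ ∫₀¹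 f₀(y)(G w)(y) h(y) dy over the set {h ∈ L² : h = 0 a.e. on [0,1] \ F̃_ℓ and ‖h‖₂ = 1}. (This functional equals −⟨c, R̂(h)⟩, minus the linear response of the expectation of c to the map perturbation h, so Ṫ maximizes that response.) -/

import Mathlib

open MeasureTheory
open scoped RealInnerProductSpace

/-- Lebesgue measure restricted to the unit interval `[0,1]`. -/
noncomputable def μ01 : Measure ℝ := volume.restrict (Set.Icc (0 : ℝ) 1)

/-- The reflected-noise kernel of a map `T` and a noise density `ρ`:
`k(x,y) = Σ_{i∈ℤ} (ρ(2i + x − T(y)) + ρ(2i − x − T(y)))`. -/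
noncomputable def reflKernel (T : ℝ → ℝ) (ρ : ℝ → ℝ) (x y : ℝ) : ℝ :=
  ∑' i : ℤ, (ρ (2 * i + x - T y) + ρ (2 * i - x - T y))

/-- The operator `G` given by
`(G h)(y) = ∫₀¹ [Σ_{i∈ℤ} (ρ'(2i + x − T₀(y)) + ρ'(2i − x − T₀(y)))] h(x) dx`. -/
noncomputable def Gfun (T₀ : ℝ → ℝ) (ρ' : ℝ → ℝ) (h : ℝ → ℝ) (y : ℝ) : ℝ :=
  ∫ x, (∑' i : ℤ, (ρ' (2 * i + x - T₀ y) + ρ' (2 * i - x - T₀ y))) * h x ∂μ01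

/-- The set `F̃_ℓ = {x ∈ [0,1] : ℓ ≤ T₀(x) ≤ 1 − ℓ}`. -/
def Ftilde (T₀ : ℝ → ℝ) (ℓ : ℝ) : Set ℝ :=
  {x | x ∈ Set.Icc (0 : ℝ) 1 ∧ ℓ ≤ T₀ x ∧ T₀ x ≤ 1 - ℓ}

lemma measurable_tsum_int {α : Type*} [MeasurableSpace α] {f : ℤ → α → ℝ}
    (hf : ∀ i, Measurable (f i)) (hsupp : ∀ x, {i | f i x ≠ 0}.Finite) :
    Measurable (fun x => ∑' i, f i x) := by
  have h : ∀ x, Filter.Tendsto (fun n : ℕ => ∑ i ∈ Finset.Icc (-(n:ℤ)) n, f i x)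
      Filter.atTop (nhds (∑' i, f i x)) := by
    intro x
    apply Filter.Tendsto.congr' _ tendsto_const_nhds
    have hfin := hsupp x
    obtain ⟨N, hN⟩ : ∃ N : ℕ, ∀ i ∈ hfin.toFinset, -(N:ℤ) ≤ i ∧ i ≤ N := by
      refine ⟨(hfin.toFinset.sup fun i => i.natAbs), fun i hi => ?_⟩
      have h2 := Finset.le_sup (f := fun i : ℤ => i.natAbs) hi
      omega
    rw [Filter.eventuallyEq_iff_exists_mem]
    refine ⟨Set.Ici N, Filter.Ici_mem_atTop N, fun n hn => ?_⟩
    have hn' : (N:ℤ) ≤ n := by exact_mod_cast hn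
    refine tsum_eq_sum ?_
    intro i hi
    by_contra hne
    have := hN i (hfin.mem_toFinset.2 hne)
    simp only [Finset.mem_Icc] at hi
    omega
  exact measurable_of_tendsto_metrizable
    (fun n => Finset.measurable_sum _ fun i _ => hf i) (tendsto_pi_nhds.2 h)

lemma abs_tsum_le_of_support {f : ℤ → ℝ} {s : Finset ℤ} {b : ℝ}
    (h0 : ∀ i ∉ s, f i = 0) (hb : ∀ i, |f i| ≤ b) :
    |∑' i, f i| ≤ s.card * b := by
  rw [tsum_eq_sum h0]
  calc |∑ i ∈ s, f i| ≤ ∑ i ∈ s, |f i| := Finset.abs_sum_le_sum_abs _ _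
    _ ≤ ∑ _i ∈ s, b := Finset.sum_le_sum fun i _ => hb i
    _ = s.card * b := by rw [Finset.sum_const, nsmul_eq_mul]

lemma off_support {g : ℝ → ℝ} (hg : ∀ u, u ∉ Set.Icc (-1:ℝ) 1 → g u = 0)
    {x t : ℝ} (hx : x ∈ Set.Icc (0:ℝ) 1) (ht : t ∈ Set.Icc (0:ℝ) 1) :
    ∀ i : ℤ, i ∉ ({-1,0,1} : Finset ℤ) →
      g (2*i + x - t) + g (2*i - x - t) = 0 := by
  intro i hi
  simp only [Finset.mem_insert, Finset.mem_singleton] at hi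
  push_neg at hi
  obtain ⟨hx0, hx1⟩ := hx; obtain ⟨ht0, ht1⟩ := ht
  have h1 : g (2*i + x - t) = 0 := by
    apply hg; intro hu
    obtain ⟨hu1, hu2⟩ := hu
    have l1 : (-2:ℝ) ≤ 2*i := by linarith
    have l2 : (2:ℝ)*i ≤ 2 := by linarith
    have l1' : (-2:ℤ) ≤ 2*i := by exact_mod_cast l1
    have l2' : (2:ℤ)*i ≤ 2 := by exact_mod_cast l2
    omega
  have h2 : g (2*i - x - t) = 0 := by
    apply hg; intro hu
    obtain ⟨hu1, hu2⟩ := hu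
    have l1 : (-1:ℝ) ≤ 2*i := by linarith
    have l2 : (2:ℝ)*i ≤ 3 := by linarith
    have l1' : (-1:ℤ) ≤ 2*i := by exact_mod_cast l1
    have l2' : (2:ℤ)*i ≤ 3 := by exact_mod_cast l2
    omega
  rw [h1, h2, add_zero]

lemma support_finite {g : ℝ → ℝ} (hg : ∀ u, u ∉ Set.Icc (-1:ℝ) 1 → g u = 0) (x t : ℝ) :
    {i : ℤ | g (2*i + x - t) + g (2*i - x - t) ≠ 0}.Finite := by
  apply Set.Finite.subset (Set.finite_Icc (-(⌈(1+|x|+|t|)/2⌉) : ℤ) ⌈(1+|x|+|t|)/2⌉)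
  intro i hi
  simp only [Set.mem_setOf_eq] at hi
  have habs : |2*(i:ℝ)| ≤ 1+|x|+|t| := by
    have h1 : (2*(i:ℝ) + x - t ∈ Set.Icc (-1:ℝ) 1) ∨ (2*(i:ℝ) - x - t ∈ Set.Icc (-1:ℝ) 1) := by
      by_contra hcon
      push_neg at hcon
      rw [hg _ hcon.1, hg _ hcon.2, add_zero] at hi
      exact hi rfl
    have hx1 := neg_abs_le x; have hx2 := le_abs_self x
    have ht1 := neg_abs_le t; have ht2 := le_abs_self t
    rcases h1 with ⟨ha, hb⟩ | ⟨ha, hb⟩ <;> rw [abs_le] <;> constructor <;> linarith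
  have h2 : |(i:ℝ)| ≤ (1+|x|+|t|)/2 := by
    rw [abs_mul] at habs
    have : |(2:ℝ)| = 2 := by norm_num
    rw [this] at habs
    linarith
  have h3 := (abs_le.1 h2).1
  have h4 := (abs_le.1 h2).2
  have h5 := Int.le_ceil ((1+|x|+|t|)/2)
  rw [Set.mem_Icc]
  constructor
  · have : ((-(⌈(1+|x|+|t|)/2⌉) : ℤ) : ℝ) ≤ (i:ℝ) := by push_cast; linarith
    exact_mod_cast this
  · have : (i:ℝ) ≤ ((⌈(1+|x|+|t|)/2⌉ : ℤ) : ℝ) := by push_cast; linarith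
    exact_mod_cast this

lemma null_pre_add (c : ℝ) {E : Set ℝ} (hE : volume E = 0) :
    volume {x : ℝ | x + c ∈ E} = 0 :=
  (measurePreserving_add_right volume c).quasiMeasurePreserving.preimage_null hE

lemma null_pre_sub (c : ℝ) {E : Set ℝ} (hE : volume E = 0) :
    volume {x : ℝ | c - x ∈ E} = 0 :=
  (Measure.measurePreserving_sub_left volume c).quasiMeasurePreserving.preimage_null hE

/-- Explicit formula for the unique map perturbation maximising the
linear response of the expectation of an observable `c`, for a deterministic map
with reflected additive noise: with `M = 𝟙_{F̃_ℓ}·f₀·(G w)`, the function `M` is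
essentially bounded with `‖M‖₂ > 0`, and `Ṫ = −M/‖M‖₂` is the unique minimizer of
`h ↦ ∫ f₀ (G w) h` over `{h : h = 0 a.e. off F̃_ℓ, ‖h‖₂ = 1}`. -/
theorem optimal_map_perturbation_for_expectation
    (T₀ : ℝ → ℝ) (hT₀meas : Measurable T₀)
    (hT₀maps : Set.MapsTo T₀ (Set.Icc (0 : ℝ) 1) (Set.Icc (0 : ℝ) 1))
    (ρ : ℝ → ℝ) (K : NNReal) (hρLip : LipschitzWith K ρ)
    (hρnonneg : ∀ x, 0 ≤ ρ x) (hρint : ∫ x, ρ x = 1)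
    (hρsupp : ∀ x, x ∉ Set.Icc (-1 : ℝ) 1 → ρ x = 0)
    (ρ' : ℝ → ℝ) (hρ'meas : Measurable ρ') (hρ'bdd : ∃ C : ℝ, ∀ x, |ρ' x| ≤ C)
    (hρ'deriv : ∀ᵐ x, HasDerivAt ρ (ρ' x) x)
    (L₀ : Lp ℝ 2 μ01 →L[ℝ] Lp ℝ 2 μ01)
    (hL₀ : ∀ f : Lp ℝ 2 μ01,
      ∀ᵐ x ∂μ01, (L₀ f) x = ∫ y, reflKernel T₀ ρ x y * f y ∂μ01)
    (hmix : ∀ g : Lp ℝ 2 μ01, (∫ x, g x ∂μ01) = 0 →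
      Filter.Tendsto (fun n : ℕ => ‖(L₀ ^ n) g‖) Filter.atTop (nhds 0))
    (f₀ : Lp ℝ 2 μ01) (hf₀fix : L₀ f₀ = f₀) (hf₀int : ∫ x, f₀ x ∂μ01 = 1)
    (ℓ : ℝ) (hℓ : 0 < ℓ)
    (c : Lp ℝ 2 μ01) (hc : ⟪c, f₀⟫ = 0)
    (w : Lp ℝ 2 μ01) (hwf₀ : ⟪w, f₀⟫ = 0)
    (hwc : w - (ContinuousLinearMap.adjoint L₀) w = c)
    (F' : Set ℝ) (hF'sub : F' ⊆ Ftilde T₀ ℓ) (hF'pos : 0 < volume F')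
    (hf₀pos : ∀ y ∈ F', 0 < f₀ y)
    (hGw : ∀ y ∈ F', Gfun T₀ ρ' (⇑w) y ≠ 0) :
    (∃ C : ℝ, ∀ᵐ y ∂μ01,
      |(Ftilde T₀ ℓ).indicator (fun y => f₀ y * Gfun T₀ ρ' (⇑w) y) y| ≤ C) ∧
    0 < (eLpNorm ((Ftilde T₀ ℓ).indicator
          (fun y => f₀ y * Gfun T₀ ρ' (⇑w) y)) 2 μ01).toReal ∧
    ∃ Tdot : Lp ℝ 2 μ01,
      (∀ᵐ y ∂μ01, Tdot y =
        -((Ftilde T₀ ℓ).indicator (fun y => f₀ y * Gfun T₀ ρ' (⇑w) y) y) /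
          (eLpNorm ((Ftilde T₀ ℓ).indicator
            (fun y => f₀ y * Gfun T₀ ρ' (⇑w) y)) 2 μ01).toReal) ∧
      (∀ᵐ y ∂μ01, y ∉ Ftilde T₀ ℓ → Tdot y = 0) ∧ ‖Tdot‖ = 1 ∧
      (∀ h : Lp ℝ 2 μ01,
        (∀ᵐ y ∂μ01, y ∉ Ftilde T₀ ℓ → h y = 0) → ‖h‖ = 1 →
          ∫ y, f₀ y * Gfun T₀ ρ' (⇑w) y * Tdot y ∂μ01 ≤
            ∫ y, f₀ y * Gfun T₀ ρ' (⇑w) y * h y ∂μ01) ∧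
      (∀ h : Lp ℝ 2 μ01,
        (∀ᵐ y ∂μ01, y ∉ Ftilde T₀ ℓ → h y = 0) → ‖h‖ = 1 →
        (∀ h' : Lp ℝ 2 μ01,
          (∀ᵐ y ∂μ01, y ∉ Ftilde T₀ ℓ → h' y = 0) → ‖h'‖ = 1 →
            ∫ y, f₀ y * Gfun T₀ ρ' (⇑w) y * h y ∂μ01 ≤
              ∫ y, f₀ y * Gfun T₀ ρ' (⇑w) y * h' y ∂μ01) →
        h = Tdot) := by
  classical
  obtain ⟨C, hC⟩ := hρ'bdd
  have hC0 : 0 ≤ C := (abs_nonneg _).trans (hC 0)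
  haveI : IsFiniteMeasure μ01 := by
    constructor
    unfold μ01
    rw [Measure.restrict_apply_univ, Real.volume_Icc]
    norm_num
  have hae01 : ∀ᵐ x ∂μ01, x ∈ Set.Icc (0:ℝ) 1 := by
    unfold μ01; exact ae_restrict_mem measurableSet_Icc
  have hFsubIcc : Ftilde T₀ ℓ ⊆ Set.Icc (0:ℝ) 1 := fun x hx => hx.1
  have hFmeas : MeasurableSet (Ftilde T₀ ℓ) := by
    have heq : Ftilde T₀ ℓ = Set.Icc (0:ℝ) 1 ∩ (T₀ ⁻¹' (Set.Icc ℓ (1-ℓ))) := by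
      ext x
      simp [Ftilde, Set.mem_Icc, and_assoc]
    rw [heq]
    exact measurableSet_Icc.inter (hT₀meas measurableSet_Icc)
  have hFmapsIcc : ∀ y ∈ Ftilde T₀ ℓ, T₀ y ∈ Set.Icc (0:ℝ) 1 := by
    intro y hy
    exact ⟨hℓ.le.trans hy.2.1, hy.2.2.trans (by linarith)⟩
  -- bound on ρ
  have hρbd : ∀ s, |ρ s| ≤ 3*(K:ℝ) := by
    intro s
    by_cases hs : s ∈ Set.Icc (-1:ℝ) 1
    · have hz : ρ 2 = 0 := hρsupp 2 (by norm_num)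
      have hd := hρLip.dist_le_mul s 2
      rw [Real.dist_eq, Real.dist_eq, hz, sub_zero] at hd
      obtain ⟨hs1, hs2⟩ := hs
      have habs : |s - 2| ≤ 3 := by rw [abs_le]; constructor <;> linarith
      calc |ρ s| ≤ (K:ℝ) * |s - 2| := hd
        _ ≤ (K:ℝ) * 3 := mul_le_mul_of_nonneg_left habs K.coe_nonneg
        _ = 3*(K:ℝ) := by ring
    · rw [hρsupp s hs, abs_zero]
      positivity
  -- bound on the kernel
  have hkbd : ∀ x ∈ Set.Icc (0:ℝ) 1, ∀ y : ℝ, T₀ y ∈ Set.Icc (0:ℝ) 1 →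
      |reflKernel T₀ ρ x y| ≤ 18*(K:ℝ) := by
    intro x hx y hy
    have hb : ∀ i : ℤ, |ρ (2*i + x - T₀ y) + ρ (2*i - x - T₀ y)| ≤ 6*(K:ℝ) := by
      intro i
      calc |ρ (2*i + x - T₀ y) + ρ (2*i - x - T₀ y)|
          ≤ |ρ (2*i + x - T₀ y)| + |ρ (2*i - x - T₀ y)| := abs_add_le _ _
        _ ≤ 3*(K:ℝ) + 3*(K:ℝ) := add_le_add (hρbd _) (hρbd _)
        _ = 6*(K:ℝ) := by ring
    have := abs_tsum_le_of_support (s := ({-1,0,1} : Finset ℤ))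
      (off_support hρsupp hx hy) hb
    have hcard : (({-1,0,1} : Finset ℤ).card : ℝ) = 3 := by norm_num
    rw [hcard] at this
    calc |reflKernel T₀ ρ x y| ≤ 3 * (6*(K:ℝ)) := this
      _ = 18*(K:ℝ) := by ring
  -- integrability
  have hf₀i : Integrable (⇑f₀) μ01 := (Lp.memLp f₀).integrable (by norm_num)
  have hwi : Integrable (⇑w) μ01 := (Lp.memLp w).integrable (by norm_num)
  -- a.e. bound on f₀
  set Cf : ℝ := ∫ y, 18*(K:ℝ)*|f₀ y| ∂μ01 with hCfdef
  have hf₀bd : ∀ᵐ x ∂μ01, |f₀ x| ≤ Cf := by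
    have h1 := hL₀ f₀
    rw [hf₀fix] at h1
    filter_upwards [h1, hae01] with x hx hx1
    rw [hx]
    calc |∫ y, reflKernel T₀ ρ x y * f₀ y ∂μ01|
        ≤ ∫ y, |reflKernel T₀ ρ x y| * |f₀ y| ∂μ01 := by
          simpa [Real.norm_eq_abs] using
            norm_integral_le_integral_norm (fun y => reflKernel T₀ ρ x y * f₀ y) (μ := μ01)
      _ ≤ Cf := by
          rw [hCfdef]
          apply integral_mono_of_nonneg
            (Filter.Eventually.of_forall fun y => mul_nonneg (abs_nonneg _) (abs_nonneg _))
            (hf₀i.abs.const_mul _)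
          filter_upwards [hae01] with y hy
          exact mul_le_mul_of_nonneg_right (hkbd x hx1 y (hT₀maps hy)) (abs_nonneg _)
  -- the truncated derivative density
  set ρ2 : ℝ → ℝ := (Set.Icc (-1:ℝ) 1).indicator ρ' with hρ2def
  have hρ2meas : Measurable ρ2 := hρ'meas.indicator measurableSet_Icc
  have hρ2bd : ∀ s, |ρ2 s| ≤ C := by
    intro s
    rw [hρ2def]
    by_cases hs : s ∈ Set.Icc (-1:ℝ) 1
    · rw [Set.indicator_of_mem hs]; exact hC s
    · rw [Set.indicator_of_notMem hs]; simpa using hC0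
  have hρ2supp : ∀ u, u ∉ Set.Icc (-1:ℝ) 1 → ρ2 u = 0 :=
    fun u hu => Set.indicator_of_notMem hu _
  have hEnull : volume {s : ℝ | ρ' s ≠ ρ2 s} = 0 := by
    have h1 : ∀ᵐ s : ℝ, ρ' s = ρ2 s := by
      filter_upwards [hρ'deriv] with s hs
      by_cases h : s ∈ Set.Icc (-1:ℝ) 1
      · rw [hρ2def, Set.indicator_of_mem h]
      · rw [hρ2def, Set.indicator_of_notMem h]
        have hmem : (Set.Icc (-1:ℝ) 1)ᶜ ∈ nhds s :=
          (isOpen_compl_iff.2 isClosed_Icc).mem_nhds h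
        have hev : ∀ᶠ u in nhds s, ρ u = 0 :=
          Filter.eventually_of_mem hmem fun u hu => hρsupp u hu
        have hz : HasDerivAt ρ 0 s :=
          (hasDerivAt_const s (0:ℝ)).congr_of_eventuallyEq
            (hev.mono fun u hu => by rw [hu])
        exact hs.unique hz
    exact ae_iff.1 h1
  -- the truncated kernel
  set K2 : ℝ → ℝ → ℝ :=
    fun x y => ∑' i : ℤ, (ρ2 (2*i + x - T₀ y) + ρ2 (2*i - x - T₀ y)) with hK2def
  have hK2meas : Measurable (fun p : ℝ × ℝ => K2 p.1 p.2) := by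
    apply measurable_tsum_int
    · intro i
      apply Measurable.add
      · exact hρ2meas.comp
          ((measurable_const.add measurable_fst).sub (hT₀meas.comp measurable_snd))
      · exact hρ2meas.comp
          ((measurable_const.sub measurable_fst).sub (hT₀meas.comp measurable_snd))
    · intro p
      exact support_finite hρ2supp p.1 (T₀ p.2)
  have hK2bd : ∀ x ∈ Set.Icc (0:ℝ) 1, ∀ y : ℝ, T₀ y ∈ Set.Icc (0:ℝ) 1 →
      |K2 x y| ≤ 6*C := by
    intro x hx y hy
    have hb : ∀ i : ℤ, |ρ2 (2*i + x - T₀ y) + ρ2 (2*i - x - T₀ y)| ≤ 2*C := by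
      intro i
      calc |ρ2 (2*i + x - T₀ y) + ρ2 (2*i - x - T₀ y)|
          ≤ |ρ2 (2*i + x - T₀ y)| + |ρ2 (2*i - x - T₀ y)| := abs_add_le _ _
        _ ≤ C + C := add_le_add (hρ2bd _) (hρ2bd _)
        _ = 2*C := by ring
    have := abs_tsum_le_of_support (s := ({-1,0,1} : Finset ℤ))
      (off_support hρ2supp hx hy) hb
    have hcard : (({-1,0,1} : Finset ℤ).card : ℝ) = 3 := by norm_num
    rw [hcard] at this
    calc |K2 x y| ≤ 3 * (2*C) := this
      _ = 6*C := by ring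
  -- measurable version of w
  set w2 : ℝ → ℝ := (Lp.aestronglyMeasurable w).mk ⇑w with hw2def
  have hw2sm : StronglyMeasurable w2 := (Lp.aestronglyMeasurable w).stronglyMeasurable_mk
  have hww2 : ⇑w =ᵐ[μ01] w2 := (Lp.aestronglyMeasurable w).ae_eq_mk
  have hw2i : Integrable w2 μ01 := hwi.congr hww2
  -- rewriting Gfun
  have hGeq : ∀ y : ℝ, Gfun T₀ ρ' (⇑w) y = ∫ x, K2 x y * w2 x ∂μ01 := by
    intro y
    unfold Gfun
    apply integral_congr_ae
    have h0 : ∀ᵐ x : ℝ,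
        (∑' i : ℤ, (ρ' (2*i + x - T₀ y) + ρ' (2*i - x - T₀ y))) = K2 x y := by
      have hA : ∀ᵐ x : ℝ, ∀ i : ℤ, ρ' (2*(i:ℝ) + x - T₀ y) = ρ2 (2*(i:ℝ) + x - T₀ y) := by
        rw [ae_all_iff]
        intro i
        have h1 : volume {x : ℝ | x + (2*(i:ℝ) - T₀ y) ∈ {s : ℝ | ρ' s ≠ ρ2 s}} = 0 :=
          null_pre_add _ hEnull
        rw [ae_iff]
        convert h1 using 2
        ext x
        have harg : 2*(i:ℝ) + x - T₀ y = x + (2*(i:ℝ) - T₀ y) := by ring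
        simp only [Set.mem_setOf_eq, harg]
      have hB : ∀ᵐ x : ℝ, ∀ i : ℤ, ρ' (2*(i:ℝ) - x - T₀ y) = ρ2 (2*(i:ℝ) - x - T₀ y) := by
        rw [ae_all_iff]
        intro i
        have h1 : volume {x : ℝ | (2*(i:ℝ) - T₀ y) - x ∈ {s : ℝ | ρ' s ≠ ρ2 s}} = 0 :=
          null_pre_sub _ hEnull
        rw [ae_iff]
        convert h1 using 2
        ext x
        have harg : 2*(i:ℝ) - x - T₀ y = (2*(i:ℝ) - T₀ y) - x := by ring
        simp only [Set.mem_setOf_eq, harg]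
      filter_upwards [hA, hB] with x h1 h2
      exact tsum_congr fun i => by rw [h1 i, h2 i]
    have h0' : ∀ᵐ x ∂μ01,
        (∑' i : ℤ, (ρ' (2*i + x - T₀ y) + ρ' (2*i - x - T₀ y))) = K2 x y :=
      ae_restrict_of_ae h0
    filter_upwards [h0', hww2] with x hx hxw
    rw [hx, hxw]
  -- strong measurability of Gfun
  have hGsm : StronglyMeasurable (Gfun T₀ ρ' (⇑w)) := by
    have heq : (Gfun T₀ ρ' (⇑w)) = fun y => ∫ x, K2 x y * w2 x ∂μ01 := funext hGeq
    rw [heq]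
    apply StronglyMeasurable.integral_prod_right (f := fun y x => K2 x y * w2 x)
    exact ((hK2meas.comp measurable_swap).stronglyMeasurable.mul
      (hw2sm.comp_measurable measurable_snd))
  -- bound on Gfun
  set CG : ℝ := ∫ x, 6*C*|w2 x| ∂μ01 with hCGdef
  have hGbd : ∀ y : ℝ, T₀ y ∈ Set.Icc (0:ℝ) 1 → |Gfun T₀ ρ' (⇑w) y| ≤ CG := by
    intro y hy
    rw [hGeq y]
    calc |∫ x, K2 x y * w2 x ∂μ01| ≤ ∫ x, |K2 x y| * |w2 x| ∂μ01 := by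
          simpa [Real.norm_eq_abs] using
            norm_integral_le_integral_norm (fun x => K2 x y * w2 x) (μ := μ01)
      _ ≤ CG := by
          rw [hCGdef]
          apply integral_mono_of_nonneg
            (Filter.Eventually.of_forall fun x => mul_nonneg (abs_nonneg _) (abs_nonneg _))
            (hw2i.abs.const_mul _)
          filter_upwards [hae01] with x hx
          exact mul_le_mul_of_nonneg_right (hK2bd x hx y hy) (abs_nonneg _)
  -- the function M
  set M : ℝ → ℝ := (Ftilde T₀ ℓ).indicator (fun y => f₀ y * Gfun T₀ ρ' (⇑w) y) with hMdef
  have hMaesm : AEStronglyMeasurable M μ01 :=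
    ((Lp.aestronglyMeasurable f₀).mul hGsm.aestronglyMeasurable).indicator hFmeas
  have hMbd : ∀ᵐ y ∂μ01, |M y| ≤ |Cf| * |CG| := by
    filter_upwards [hf₀bd] with y hy
    rw [hMdef]
    by_cases hmem : y ∈ Ftilde T₀ ℓ
    · rw [Set.indicator_of_mem hmem, abs_mul]
      exact mul_le_mul (hy.trans (le_abs_self _))
        ((hGbd y (hFmapsIcc y hmem)).trans (le_abs_self _)) (abs_nonneg _) (abs_nonneg _)
    · rw [Set.indicator_of_notMem hmem]
      simp only [abs_zero]
      positivity
  have hMmem : MemLp M 2 μ01 :=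
    MemLp.of_bound hMaesm (|Cf| * |CG|) (by simpa [Real.norm_eq_abs] using hMbd)
  set n : ℝ := (eLpNorm M 2 μ01).toReal with hndef
  have hn_ne : eLpNorm M 2 μ01 ≠ 0 := by
    rw [Ne, eLpNorm_eq_zero_iff hMaesm (by norm_num)]
    intro hM0
    have hsubset : F' ⊆ {y | M y ≠ 0} := by
      intro y hy
      have hyF : y ∈ Ftilde T₀ ℓ := hF'sub hy
      simp only [Set.mem_setOf_eq, hMdef, Set.indicator_of_mem hyF]
      exact mul_ne_zero (ne_of_gt (hf₀pos y hy)) (hGw y hy)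
    have h0 : μ01 {y | M y ≠ 0} = 0 := by
      rw [Filter.EventuallyEq, ae_iff] at hM0
      simpa using hM0
    have hF'0 : μ01 F' = 0 := measure_mono_null hsubset h0
    have hres : μ01 F' = volume F' := by
      unfold μ01
      rw [Measure.restrict_apply' measurableSet_Icc,
        Set.inter_eq_left.2 (fun y hy => hFsubIcc (hF'sub hy))]
    rw [hres] at hF'0
    exact absurd hF'0 (ne_of_gt hF'pos)
  have hn_top : eLpNorm M 2 μ01 ≠ ⊤ := hMmem.2.ne
  have hnpos : 0 < n := ENNReal.toReal_pos hn_ne hn_top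
  set Mlp : Lp ℝ 2 μ01 := hMmem.toLp M with hMlpdef
  have hMlp_coe : ⇑Mlp =ᵐ[μ01] M := hMmem.coeFn_toLp
  have hMlp_norm : ‖Mlp‖ = n := by rw [hMlpdef, Lp.norm_toLp]
  have hinner : ∀ h : Lp ℝ 2 μ01, (∀ᵐ y ∂μ01, y ∉ Ftilde T₀ ℓ → h y = 0) →
      ∫ y, f₀ y * Gfun T₀ ρ' (⇑w) y * h y ∂μ01 = ⟪Mlp, h⟫ := by
    intro h hh
    rw [L2.inner_def]
    apply integral_congr_ae
    filter_upwards [hMlp_coe, hh] with y h1 h2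
    simp only [RCLike.inner_apply, conj_trivial]
    rw [h1, hMdef]
    by_cases hmem : y ∈ Ftilde T₀ ℓ
    · rw [Set.indicator_of_mem hmem, mul_comm]
    · rw [Set.indicator_of_notMem hmem, h2 hmem, mul_zero, zero_mul]
  set Td : Lp ℝ 2 μ01 := (-(n⁻¹)) • Mlp with hTddef
  have hTd_coe : ∀ᵐ y ∂μ01, Td y = -(M y)/n := by
    filter_upwards [Lp.coeFn_smul (-(n⁻¹)) Mlp, hMlp_coe] with y h1 h2
    rw [h1]
    simp only [Pi.smul_apply, smul_eq_mul]
    rw [h2]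
    ring
  have hTd_zero : ∀ᵐ y ∂μ01, y ∉ Ftilde T₀ ℓ → Td y = 0 := by
    filter_upwards [hTd_coe] with y h1 h2
    rw [h1, hMdef, Set.indicator_of_notMem h2]
    simp
  have hTd_norm : ‖Td‖ = 1 := by
    rw [hTddef, norm_smul, hMlp_norm, Real.norm_eq_abs, abs_neg,
      abs_inv, abs_of_pos hnpos]
    field_simp
  have hTd_inner : ⟪Mlp, Td⟫ = -n := by
    rw [hTddef, real_inner_smul_right, real_inner_self_eq_norm_mul_norm, hMlp_norm]
    field_simp
  have hlow : ∀ h : Lp ℝ 2 μ01, ‖h‖ = 1 → -n ≤ ⟪Mlp, h⟫ := by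
    intro h hh
    have hcs := real_inner_le_norm (-Mlp) h
    rw [inner_neg_left, norm_neg, hMlp_norm, hh, mul_one] at hcs
    linarith
  refine ⟨⟨|Cf| * |CG|, hMbd⟩, hnpos, Td, hTd_coe, hTd_zero, hTd_norm, ?_, ?_⟩
  · intro h hsupp0 hnorm
    rw [hinner Td hTd_zero, hinner h hsupp0, hTd_inner]
    exact hlow h hnorm
  · intro h hsupp0 hnorm hminim
    have h1 : ⟪Mlp, h⟫ ≤ -n := by
      have := hminim Td hTd_zero hTd_norm
      rwa [hinner h hsupp0, hinner Td hTd_zero, hTd_inner] at this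
    have h2 : ⟪Mlp, h⟫ = -n := le_antisymm h1 (hlow h hnorm)
    have h3 : ⟪-Mlp, h⟫ = ‖-Mlp‖ * ‖h‖ := by
      rw [inner_neg_left, h2, norm_neg, hMlp_norm, hnorm, mul_one]
      ring
    have h4 := inner_eq_norm_mul_iff_real.1 h3
    rw [hnorm, norm_neg, hMlp_norm, one_smul] at h4
    -- h4 : -Mlp = n • h
    have h5 : (-(n⁻¹)) • Mlp = h := by
      calc (-(n⁻¹)) • Mlp = (n⁻¹) • (-Mlp) := by rw [neg_smul, smul_neg]
        _ = (n⁻¹) • (n • h) := by rw [h4]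
        _ = (n⁻¹ * n) • h := smul_smul _ _ _
        _ = h := by rw [inv_mul_cancel₀ (ne_of_gt hnpos), one_smul]
    rw [hTddef]
    exact h5.symm
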